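/- Let K ≥ 2, N ≥ 1, x : {1,…,N} → {1,…,K} with every category nonempty, and let u ∈ Δ^N have all coordinates strictly positive. Then F(u) equals the intersection of Δ with the sets {θ ∈ ℝ^K : θ_ℓ ≤ η_{k→ℓ}(u) · θ_k} over all k, ℓ ∈ {1,…,K}; in particular F(u) is a compact convex subset of Δ defined by finitely many linear inequalities. -/

import Mathlib

noncomputable section

/-- The `ℓ`-th vertex of the probability simplex in `ℝ^K` (standard basis vector). -/
def vtx (K : ℕ) (ℓ : Fin K) : Fin K → ℝ := fun i => if i = ℓ then 1 else 0

/-- The subsimplex `Δ_k(θ)`: convex hull of `{θ} ∪ {V_ℓ : ℓ ≠ k}`. -/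
def subsimplex (K : ℕ) (k : Fin K) (θ : Fin K → ℝ) : Set (Fin K → ℝ) :=
  convexHull ℝ (insert θ {z | ∃ ℓ : Fin K, ℓ ≠ k ∧ z = vtx K ℓ})

lemma mem_subsimplex_iff {K : ℕ} (k : Fin K) {θ u : Fin K → ℝ}
    (hθ : θ ∈ stdSimplex ℝ (Fin K)) (hu : u ∈ stdSimplex ℝ (Fin K))
    (hupos : ∀ ℓ, 0 < u ℓ) :
    u ∈ subsimplex K k θ ↔ ∀ ℓ, u k * θ ℓ ≤ u ℓ * θ k := by
  constructor
  · intro hmem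
    have hC : subsimplex K k θ ⊆ {v : Fin K → ℝ | ∀ ℓ, v k * θ ℓ ≤ v ℓ * θ k} := by
      apply convexHull_min
      · rintro v (rfl | ⟨ℓ', hℓ', rfl⟩)
        · intro ℓ; rw [mul_comm]
        · intro ℓ
          have h1 : vtx K ℓ' k = 0 := by
            simp [vtx, (hℓ'.symm : ¬ k = ℓ')]
          have h2 : 0 ≤ vtx K ℓ' ℓ := by
            unfold vtx; positivity
          rw [h1, zero_mul]
          exact mul_nonneg h2 (hθ.1 k)
      · intro v hv w hw a b ha hb hab ℓ
        simp only [Set.mem_setOf_eq, Pi.add_apply, Pi.smul_apply, smul_eq_mul] at *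
        nlinarith [hv ℓ, hw ℓ]
    exact hC hmem
  · intro h
    have hθk : u k ≤ θ k := by
      have hs : ∑ ℓ, u k * θ ℓ ≤ ∑ ℓ, u ℓ * θ k :=
        Finset.sum_le_sum fun ℓ _ => h ℓ
      rw [← Finset.mul_sum, ← Finset.sum_mul, hθ.2, hu.2, mul_one, one_mul] at hs
      exact hs
    have hθkpos : 0 < θ k := lt_of_lt_of_le (hupos k) hθk
    set t : ℝ := u k / θ k with ht
    have htk : t * θ k = u k := div_mul_cancel₀ _ (ne_of_gt hθkpos)
    have hwnn : ∀ ℓ, 0 ≤ u ℓ - t * θ ℓ := by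
      intro ℓ
      have : t * θ ℓ ≤ u ℓ := by
        rw [ht, div_mul_eq_mul_div, div_le_iff₀ hθkpos]
        linarith [h ℓ, mul_comm (u ℓ) (θ k)]
      linarith
    set w : Fin K → ℝ := fun ℓ => (u ℓ - t * θ ℓ) + (if ℓ = k then t else 0) with hw
    set z : Fin K → (Fin K → ℝ) := fun ℓ => if ℓ = k then θ else vtx K ℓ with hz
    have hwnn' : ∀ ℓ ∈ Finset.univ, (0:ℝ) ≤ w ℓ := by
      intro ℓ _
      have := hwnn ℓ
      have htnn : (0:ℝ) ≤ t := le_of_lt (div_pos (hupos k) hθkpos)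
      by_cases hc : ℓ = k <;> simp [hw, hc] <;> linarith
    have hwsum : ∑ ℓ, w ℓ = 1 := by
      rw [hw]
      rw [Finset.sum_add_distrib]
      rw [Finset.sum_ite_eq' Finset.univ k (fun _ => t)]
      simp only [Finset.mem_univ, if_true]
      have : ∑ ℓ, (u ℓ - t * θ ℓ) = 1 - t := by
        rw [Finset.sum_sub_distrib, ← Finset.mul_sum, hθ.2, hu.2, mul_one]
      rw [this]; ring
    have hzmem : ∀ ℓ ∈ Finset.univ, z ℓ ∈ (insert θ {v | ∃ ℓ' : Fin K, ℓ' ≠ k ∧ v = vtx K ℓ'}) := by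
      intro ℓ _
      by_cases hc : ℓ = k
      · simp [hz, hc]
      · right
        simp only [hz, hc, if_false, Set.mem_setOf_eq]
        exact ⟨ℓ, hc, rfl⟩
    have hcm := Finset.centerMass_mem_convexHull (t := (Finset.univ : Finset (Fin K)))
      (w := w) (z := z) hwnn' (by rw [hwsum]; norm_num) hzmem
    rw [Finset.centerMass_eq_of_sum_1 _ _ hwsum] at hcm
    have heq : ∑ ℓ, w ℓ • z ℓ = u := by
      funext j
      have : (∑ ℓ, w ℓ • z ℓ) j = ∑ ℓ, w ℓ * z ℓ j := by
        rw [Finset.sum_apply]; simp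
      rw [this]
      rw [← Finset.add_sum_erase Finset.univ _ (Finset.mem_univ k)]
      have hterm : w k * z k j = t * θ j := by
        simp [hw, hz, htk]
      rw [hterm]
      have hrest : ∑ ℓ ∈ Finset.univ.erase k, w ℓ * z ℓ j
          = ∑ ℓ ∈ Finset.univ.erase k, (if j = ℓ then w ℓ else 0) := by
        apply Finset.sum_congr rfl
        intro ℓ hℓ
        have hℓk : ℓ ≠ k := (Finset.mem_erase.mp hℓ).1
        simp only [hz, hℓk, if_false, vtx]
        by_cases hjl : j = ℓ <;> simp [hjl]
      rw [hrest, Finset.sum_ite_eq (Finset.univ.erase k) j w]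
      by_cases hjk : j = k
      · simp [hjk, htk]
      · have : j ∈ Finset.univ.erase k := Finset.mem_erase.mpr ⟨hjk, Finset.mem_univ j⟩
        rw [if_pos this]
        simp only [hw, hjk, if_false]
        ring
    rw [heq] at hcm
    exact hcm

theorem stmt12 (K N : ℕ) (hK : 2 ≤ K) (hN : 1 ≤ N)
    (x : Fin N → Fin K) (hx : ∀ k, ∃ n, x n = k)
    (u : Fin N → Fin K → ℝ) (hu : ∀ n, u n ∈ stdSimplex ℝ (Fin K))
    (hupos : ∀ n ℓ, 0 < u n ℓ)
    (η : Fin K → Fin K → ℝ)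
    (hη : ∀ k ℓ, IsLeast {v : ℝ | ∃ n, x n = k ∧ v = u n ℓ / u n k} (η k ℓ)) :
    ({θ ∈ stdSimplex ℝ (Fin K) | ∀ n, u n ∈ subsimplex K (x n) θ} =
      stdSimplex ℝ (Fin K) ∩
        ⋂ (k : Fin K) (ℓ : Fin K), {θ : Fin K → ℝ | θ ℓ ≤ η k ℓ * θ k}) ∧
    IsCompact {θ ∈ stdSimplex ℝ (Fin K) | ∀ n, u n ∈ subsimplex K (x n) θ} ∧
    Convex ℝ {θ ∈ stdSimplex ℝ (Fin K) | ∀ n, u n ∈ subsimplex K (x n) θ} := by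
  have hmain : {θ ∈ stdSimplex ℝ (Fin K) | ∀ n, u n ∈ subsimplex K (x n) θ} =
      stdSimplex ℝ (Fin K) ∩
        ⋂ (k : Fin K) (ℓ : Fin K), {θ : Fin K → ℝ | θ ℓ ≤ η k ℓ * θ k} := by
    ext θ
    simp only [Set.mem_setOf_eq, Set.mem_inter_iff, Set.mem_iInter]
    constructor
    · rintro ⟨hθ, hmem⟩
      refine ⟨hθ, fun k ℓ => ?_⟩
      obtain ⟨n, hxn, hval⟩ := (hη k ℓ).1
      have h := (mem_subsimplex_iff (x n) hθ (hu n) (hupos n)).mp (hmem n) ℓ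
      rw [hxn] at h
      rw [hval, div_mul_eq_mul_div, le_div_iff₀ (hupos n k)]
      linarith [mul_comm (θ ℓ) (u n k)]
    · rintro ⟨hθ, hineq⟩
      refine ⟨hθ, fun n => ?_⟩
      rw [mem_subsimplex_iff (x n) hθ (hu n) (hupos n)]
      intro ℓ
      set k := x n with hk
      have hlb : η k ℓ ≤ u n ℓ / u n k := (hη k ℓ).2 ⟨n, rfl, rfl⟩
      have h1 : θ ℓ ≤ u n ℓ / u n k * θ k :=
        le_trans (hineq k ℓ) (mul_le_mul_of_nonneg_right hlb (hθ.1 k))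
      rw [div_mul_eq_mul_div, le_div_iff₀ (hupos n k)] at h1
      linarith [mul_comm (θ ℓ) (u n k)]
  refine ⟨hmain, ?_, ?_⟩
  · rw [hmain]
    apply (isCompact_stdSimplex ℝ (Fin K)).inter_right
    apply isClosed_iInter; intro k; apply isClosed_iInter; intro ℓ
    exact isClosed_le (continuous_apply ℓ) (continuous_const.mul (continuous_apply k))
  · rw [hmain]
    apply (convex_stdSimplex ℝ (Fin K)).inter
    apply convex_iInter; intro k; apply convex_iInter; intro ℓ
    intro a ha b hb s t hs ht hst
    simp only [Set.mem_setOf_eq, Pi.add_apply, Pi.smul_apply, smul_eq_mul] at *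
    nlinarith [ha, hb]
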